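/- Global bias-robustness of the Kernel Score posterior: Assume the prior density π is bounded over Θ and the kernel k satisfies 0 ≤ sup_{x,y∈X} k(x,y) ≤ κ < ∞. Then for any fixed dataset y_1,…,y_n, the Kernel Score posterior π_{S_k}(·|y_1,…,y_n) is globally bias-robust, i.e. sup_{θ∈Θ} sup_{z∈X} |PIF(z, θ, P̂_n)| < ∞. -/

import Mathlib

open MeasureTheory

open Filter Metric

private lemma deriv_zero_of_punctured {f : ℝ → ℝ}
    (hf : ∀ᶠ ε in nhdsWithin (0:ℝ) {(0:ℝ)}ᶜ, f ε = 0) : deriv f 0 = 0 := by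
  by_cases h0 : f 0 = 0
  · have hev : f =ᶠ[nhds (0:ℝ)] fun _ => 0 := by
      rw [← nhdsNE_sup_pure (0:ℝ)]
      refine Filter.eventually_sup.2 ⟨hf, ?_⟩
      simpa using h0
    rw [hev.deriv_eq, deriv_const]
  · rw [deriv_zero_of_not_differentiableAt]
    intro hd
    have h1 : Filter.Tendsto f (nhdsWithin (0:ℝ) {(0:ℝ)}ᶜ) (nhds (f 0)) :=
      hd.continuousAt.tendsto.mono_left nhdsWithin_le_nhds
    have h2 : Filter.Tendsto f (nhdsWithin (0:ℝ) {(0:ℝ)}ᶜ) (nhds 0) := by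
      refine Filter.Tendsto.congr' ?_ tendsto_const_nhds
      filter_upwards [hf] with x hx
      exact hx.symm
    exact h0 (tendsto_nhds_unique h1 h2)

private lemma aux_bound {α : Type*} [MeasurableSpace α] {μ : Measure α}
    (g h : α → ℝ) (θ : α) (M Eb : ℝ) (hM0 : 0 ≤ M)
    (hgnn : ∀ t, 0 ≤ g t) (hgθ : g θ ≤ Eb) (hhθ : |h θ| ≤ M)
    (hhM : ∀ᵐ t ∂μ, |h t| ≤ M) :
    |deriv (fun ε : ℝ => g θ * Real.exp (ε * h θ) / ∫ t, g t * Real.exp (ε * h t) ∂μ) 0|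
      ≤ max (2 * Eb * M / ∫ t, g t ∂μ) 0 := by
  set F : ℝ → α → ℝ := fun ε t => g t * Real.exp (ε * h t) with hF
  -- two-point lemma: integrability at two distinct parameters forces integrability of g
  have htwo : ∀ ε₁ ε₂ : ℝ, ε₁ ≠ ε₂ → Integrable (F ε₁) μ → Integrable (F ε₂) μ →
      Integrable g μ := by
    intro ε₁ ε₂ hne h1 h2
    obtain ⟨G₁, hG₁m, hG₁e⟩ := h1.1
    obtain ⟨G₂, hG₂m, hG₂e⟩ := h2.1
    set g' : α → ℝ := fun t =>
      if 0 < G₁ t then G₁ t * Real.exp (-ε₁ * (Real.log (G₂ t / G₁ t) / (ε₂ - ε₁))) else 0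
      with hg'
    have hg'm : Measurable g' := by
      apply Measurable.ite (measurableSet_lt measurable_const hG₁m.measurable)
      · exact hG₁m.measurable.mul (Real.measurable_exp.comp
          ((((Real.measurable_log.comp
            (hG₂m.measurable.div hG₁m.measurable)).div_const _).const_mul _)))
      · exact measurable_const
    have hae : ∀ᵐ t ∂μ, g t = g' t := by
      filter_upwards [hG₁e, hG₂e, hhM] with t h1e h2e hMt
      by_cases hg0 : g t = 0
      · have hGz : G₁ t = 0 := by
          rw [← h1e]; simp [hF, hg0]
        simp [hg', hGz, hg0]
      · have hgpos : 0 < g t := (hgnn t).lt_of_ne (Ne.symm hg0)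
        have hF1 : G₁ t = g t * Real.exp (ε₁ * h t) := h1e.symm
        have hF2 : G₂ t = g t * Real.exp (ε₂ * h t) := h2e.symm
        have hG₁pos : 0 < G₁ t := by rw [hF1]; positivity
        have hdiv : G₂ t / G₁ t = Real.exp ((ε₂ - ε₁) * h t) := by
          rw [hF1, hF2, mul_div_mul_left _ _ (ne_of_gt hgpos), ← Real.exp_sub]
          congr 1; ring
        have hlog : Real.log (G₂ t / G₁ t) / (ε₂ - ε₁) = h t := by
          rw [hdiv, Real.log_exp, mul_div_cancel_left₀ _ (sub_ne_zero.mpr (Ne.symm hne))]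
        simp only [hg']
        rw [if_pos hG₁pos, hlog, hF1, mul_assoc, ← Real.exp_add,
          show ε₁ * h t + -ε₁ * h t = 0 by ring, Real.exp_zero, mul_one]
    refine (h1.const_mul (Real.exp (|ε₁| * M))).mono' ⟨g', hg'm.stronglyMeasurable, hae⟩ ?_
    filter_upwards [hhM] with t hMt
    have hx : 0 ≤ |ε₁| * M + ε₁ * h t := by
      have h1' := neg_abs_le (ε₁ * h t)
      have h2' : |ε₁ * h t| = |ε₁| * |h t| := abs_mul _ _
      have h3' : |ε₁| * |h t| ≤ |ε₁| * M := mul_le_mul_of_nonneg_left hMt (abs_nonneg _)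
      linarith
    have hone : (1:ℝ) ≤ Real.exp (|ε₁| * M + ε₁ * h t) := by
      calc (1:ℝ) = Real.exp 0 := Real.exp_zero.symm
      _ ≤ _ := Real.exp_le_exp.mpr hx
    rw [Real.norm_eq_abs, abs_of_nonneg (hgnn t)]
    have hrw : Real.exp (|ε₁| * M) * F ε₁ t = g t * Real.exp (|ε₁| * M + ε₁ * h t) := by
      simp only [hF]; rw [Real.exp_add]; ring
    calc g t ≤ g t * Real.exp (|ε₁| * M + ε₁ * h t) := le_mul_of_one_le_right (hgnn t) hone
    _ = Real.exp (|ε₁| * M) * F ε₁ t := hrw.symm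
  by_cases hex : ∃ ε₀, ε₀ ≠ 0 ∧ Integrable (F ε₀) μ
  · by_cases hgi : Integrable g μ
    · -- main case
      obtain ⟨ε₀, hε₀, hFε₀⟩ := hex
      obtain ⟨G, hGm, hGe⟩ := hgi.1
      obtain ⟨G₀, hG₀m, hG₀e⟩ := hFε₀.1
      set h' : α → ℝ := fun t => if 0 < G t then Real.log (G₀ t / G t) / ε₀ else 0 with hh'
      have hh'm : Measurable h' := by
        apply Measurable.ite (measurableSet_lt measurable_const hGm.measurable)
        · exact (Real.measurable_log.comp (hG₀m.measurable.div hGm.measurable)).div_const _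
        · exact measurable_const
      have hkey : ∀ᵐ t ∂μ, (∀ ε : ℝ, F ε t = G t * Real.exp (ε * h' t)) ∧
          |h' t| ≤ M ∧ g t = G t := by
        filter_upwards [hGe, hG₀e, hhM] with t hG hG0 hMt
        by_cases hg0 : g t = 0
        · have hGz : G t = 0 := hG ▸ hg0
          refine ⟨fun ε => ?_, ?_, hG.trans rfl⟩
          · have : F ε t = 0 := by simp [hF, hg0]
            rw [this, hGz, zero_mul]
          · simp only [hh', hGz, lt_irrefl, if_false]
            simpa using hM0
        · have hgpos : 0 < g t := (hgnn t).lt_of_ne (Ne.symm hg0)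
          have hGpos : 0 < G t := hG ▸ hgpos
          have hF0' : G₀ t = g t * Real.exp (ε₀ * h t) := hG0.symm
          have hdiv : G₀ t / G t = Real.exp (ε₀ * h t) := by
            rw [hF0', ← hG, mul_comm, mul_div_assoc, div_self (ne_of_gt hgpos), mul_one]
          have hh'eq : h' t = h t := by
            simp only [hh']
            rw [if_pos hGpos, hdiv, Real.log_exp, mul_div_cancel_left₀ _ hε₀]
          exact ⟨fun ε => by rw [hh'eq, ← hG], by rw [hh'eq]; exact hMt, hG⟩
      have hGint : Integrable G μ := hgi.congr hGe
      have hders := hasDerivAt_integral_of_dominated_loc_of_deriv_le (μ := μ) (x₀ := (0:ℝ))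
        (F := fun ε t => G t * Real.exp (ε * h' t))
        (F' := fun ε t => G t * (Real.exp (ε * h' t) * h' t))
        (bound := fun t => |G t| * (Real.exp M * M)) (Metric.ball_mem_nhds (0:ℝ) one_pos)
        (Filter.Eventually.of_forall fun ε =>
          (hGm.measurable.mul (Real.measurable_exp.comp (hh'm.const_mul ε))).aestronglyMeasurable)
        (hGint.congr (Filter.Eventually.of_forall fun t => by simp))
        ((hGm.measurable.mul ((Real.measurable_exp.comp (hh'm.const_mul 0)).mul
          hh'm)).aestronglyMeasurable)
        (by
          filter_upwards [hkey] with t ht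
          intro ε hε
          have hMh := ht.2.1
          have hε1 : |ε| ≤ 1 := by
            have := Metric.mem_ball.mp hε
            rw [Real.dist_eq, sub_zero] at this
            exact this.le
          have hexp : Real.exp (ε * h' t) ≤ Real.exp M := by
            apply Real.exp_le_exp.mpr
            calc ε * h' t ≤ |ε * h' t| := le_abs_self _
            _ = |ε| * |h' t| := abs_mul _ _
            _ ≤ 1 * M := mul_le_mul hε1 hMh (abs_nonneg _) zero_le_one
            _ = M := one_mul M
          rw [Real.norm_eq_abs, abs_mul, abs_mul, abs_of_pos (Real.exp_pos _)]
          exact mul_le_mul_of_nonneg_left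
            (mul_le_mul hexp hMh (abs_nonneg _) (Real.exp_pos _).le) (abs_nonneg _))
        (hGint.abs.mul_const _)
        (Filter.Eventually.of_forall fun t => fun ε _ =>
          ((hasDerivAt_mul_const (h' t)).exp.const_mul (G t)))
      obtain ⟨hD1int, hDder⟩ := hders
      -- rewrite the function using the measurable representatives
      have hDeq' : ∀ ε : ℝ, (∫ t, g t * Real.exp (ε * h t) ∂μ)
          = ∫ t, G t * Real.exp (ε * h' t) ∂μ :=
        fun ε => integral_congr_ae (hkey.mono fun t ht => ht.1 ε)
      have hφ : (fun ε : ℝ => g θ * Real.exp (ε * h θ) / ∫ t, g t * Real.exp (ε * h t) ∂μ)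
          = fun ε : ℝ => g θ * Real.exp (ε * h θ) / ∫ t, G t * Real.exp (ε * h' t) ∂μ := by
        funext ε; rw [hDeq' ε]
      by_cases hD0 : (∫ t, g t ∂μ) = 0
      · -- degenerate: g vanishes a.e.
        have hg0 : g =ᶠ[ae μ] 0 :=
          (integral_eq_zero_iff_of_nonneg_ae (Filter.Eventually.of_forall hgnn) hgi).mp hD0
        have hder : deriv (fun ε : ℝ =>
            g θ * Real.exp (ε * h θ) / ∫ t, g t * Real.exp (ε * h t) ∂μ) 0 = 0 := by
          apply deriv_zero_of_punctured
          apply Filter.Eventually.of_forall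
          intro ε
          have hz : (∫ t, g t * Real.exp (ε * h t) ∂μ) = 0 := by
            have : (fun t => g t * Real.exp (ε * h t)) =ᶠ[ae μ] 0 := by
              filter_upwards [hg0] with t ht
              simp [ht]
            rw [integral_congr_ae this]; simp
          rw [hz, div_zero]
        rw [hder]; simp
      · have hD0pos : 0 < ∫ t, g t ∂μ := (integral_nonneg hgnn).lt_of_ne (Ne.symm hD0)
        have hDveq : (∫ t, G t * Real.exp ((0:ℝ) * h' t) ∂μ) = ∫ t, g t ∂μ := by
          rw [← hDeq' 0]
          exact integral_congr_ae (Filter.Eventually.of_forall fun t => by simp)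
        have hN : HasDerivAt (fun ε : ℝ => g θ * Real.exp (ε * h θ))
            (g θ * (Real.exp ((0:ℝ) * h θ) * h θ)) 0 :=
          (hasDerivAt_mul_const (h θ)).exp.const_mul (g θ)
        have hdiv := hN.div hDder (by rw [hDveq]; exact hD0pos.ne')
        have hval : deriv (fun ε : ℝ =>
            g θ * Real.exp (ε * h θ) / ∫ t, G t * Real.exp (ε * h' t) ∂μ) 0
            = ((g θ * (Real.exp ((0:ℝ) * h θ) * h θ)) * (∫ t, G t * Real.exp ((0:ℝ) * h' t) ∂μ)
              - (g θ * Real.exp ((0:ℝ) * h θ)) * (∫ t, G t * (Real.exp ((0:ℝ) * h' t) * h' t) ∂μ))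
              / (∫ t, G t * Real.exp ((0:ℝ) * h' t) ∂μ) ^ 2 := hdiv.deriv
        -- bound on the derivative of the denominator
        have hD1bd : |∫ t, G t * (Real.exp ((0:ℝ) * h' t) * h' t) ∂μ| ≤ M * ∫ t, g t ∂μ := by
          have step1 : |∫ t, G t * (Real.exp ((0:ℝ) * h' t) * h' t) ∂μ|
              ≤ ∫ t, ‖G t * (Real.exp ((0:ℝ) * h' t) * h' t)‖ ∂μ := by
            rw [← Real.norm_eq_abs]
            exact norm_integral_le_integral_norm _
          have step2 : (∫ t, ‖G t * (Real.exp ((0:ℝ) * h' t) * h' t)‖ ∂μ)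
              ≤ ∫ t, M * g t ∂μ := by
            apply integral_mono_ae hD1int.norm (hgi.const_mul M)
            filter_upwards [hkey] with t ht
            have hgG := ht.2.2
            have hMh := ht.2.1
            rw [Real.norm_eq_abs, abs_mul, abs_mul, abs_of_pos (Real.exp_pos _),
              zero_mul, Real.exp_zero, one_mul, ← hgG, abs_of_nonneg (hgnn t)]
            calc g t * |h' t| ≤ g t * M := mul_le_mul_of_nonneg_left hMh (hgnn t)
            _ = M * g t := mul_comm _ _
          have step3 : (∫ t, M * g t ∂μ) = M * ∫ t, g t ∂μ := integral_const_mul M g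
          linarith [step1, step2, step3.le, step3.ge]
        rw [hφ, hval, hDveq]
        have hEb0 : 0 ≤ Eb := le_trans (hgnn θ) hgθ
        have hgθnn := hgnn θ
        refine le_trans ?_ (le_max_left _ _)
        rw [abs_div, abs_of_pos (pow_pos hD0pos 2), div_le_div_iff₀ (pow_pos hD0pos 2) hD0pos]
        have hnum : |g θ * (Real.exp ((0:ℝ) * h θ) * h θ) * (∫ t, g t ∂μ)
            - g θ * Real.exp ((0:ℝ) * h θ) * (∫ t, G t * (Real.exp ((0:ℝ) * h' t) * h' t) ∂μ)|
            ≤ 2 * Eb * M * ∫ t, g t ∂μ := by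
          rw [zero_mul, Real.exp_zero, one_mul, mul_one]
          have t1 : |g θ * h θ * ∫ t, g t ∂μ| ≤ Eb * M * ∫ t, g t ∂μ := by
            rw [abs_mul, abs_mul, abs_of_nonneg hgθnn, abs_of_pos hD0pos]
            have : g θ * |h θ| ≤ Eb * M :=
              mul_le_mul hgθ hhθ (abs_nonneg _) hEb0
            exact mul_le_mul_of_nonneg_right this hD0pos.le
          have t2 : |g θ * (∫ t, G t * (Real.exp ((0:ℝ) * h' t) * h' t) ∂μ)|
              ≤ Eb * (M * ∫ t, g t ∂μ) := by
            rw [abs_mul, abs_of_nonneg hgθnn]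
            exact mul_le_mul hgθ hD1bd (abs_nonneg _) hEb0
          calc |g θ * h θ * (∫ t, g t ∂μ)
              - g θ * (∫ t, G t * (Real.exp ((0:ℝ) * h' t) * h' t) ∂μ)|
              ≤ |g θ * h θ * ∫ t, g t ∂μ|
                + |g θ * (∫ t, G t * (Real.exp ((0:ℝ) * h' t) * h' t) ∂μ)| := abs_sub _ _
          _ ≤ Eb * M * (∫ t, g t ∂μ) + Eb * (M * ∫ t, g t ∂μ) := add_le_add t1 t2
          _ = 2 * Eb * M * ∫ t, g t ∂μ := by ring
        calc |g θ * (Real.exp ((0:ℝ) * h θ) * h θ) * (∫ t, g t ∂μ)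
            - g θ * Real.exp ((0:ℝ) * h θ) * (∫ t, G t * (Real.exp ((0:ℝ) * h' t) * h' t) ∂μ)|
              * (∫ t, g t ∂μ)
            ≤ (2 * Eb * M * ∫ t, g t ∂μ) * (∫ t, g t ∂μ) :=
          mul_le_mul_of_nonneg_right hnum hD0pos.le
        _ = 2 * Eb * M * (∫ t, g t ∂μ) ^ 2 := by ring
    · -- g not integrable but some F ε₀ integrable: denominator vanishes near 0
      obtain ⟨ε₀, hε₀, hFε₀⟩ := hex
      have hder : deriv (fun ε : ℝ =>
          g θ * Real.exp (ε * h θ) / ∫ t, g t * Real.exp (ε * h t) ∂μ) 0 = 0 := by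
        apply deriv_zero_of_punctured
        have hball : ∀ᶠ ε in nhdsWithin (0:ℝ) {(0:ℝ)}ᶜ, |ε| < |ε₀| := by
          refine Filter.Eventually.filter_mono nhdsWithin_le_nhds ?_
          filter_upwards [Metric.ball_mem_nhds (0:ℝ) (abs_pos.mpr hε₀)] with ε hε
          simpa [Real.dist_eq] using hε
        filter_upwards [hball, self_mem_nhdsWithin] with ε hlt hne0
        have hεne : ε ≠ ε₀ := fun hc => by rw [hc] at hlt; exact lt_irrefl _ hlt
        have hnint : ¬ Integrable (F ε) μ := fun hc => hgi (htwo ε ε₀ hεne hc hFε₀)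
        rw [integral_undef hnint, div_zero]
      rw [hder]
      simp
  · -- no F ε₀ integrable for ε₀ ≠ 0 : denominator vanishes on punctured neighborhood
    push_neg at hex
    have hder : deriv (fun ε : ℝ =>
        g θ * Real.exp (ε * h θ) / ∫ t, g t * Real.exp (ε * h t) ∂μ) 0 = 0 := by
      apply deriv_zero_of_punctured
      filter_upwards [self_mem_nhdsWithin] with ε hne0
      have hnint : ¬ Integrable (F ε) μ := hex ε hne0
      rw [integral_undef hnint, div_zero]
    rw [hder]
    simp

/-- Global bias-robustness of the Kernel Score posterior (Theorem 3.1 of the paper).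
The prior density is bounded over `Θ` and the kernel `k` is bounded by `κ` on the
data space `X`.  For a fixed dataset `y₁,…,y_n ∈ X`, the contaminated loss is
`L(θ, P̂_{n,ε,z}) = (1-ε)·(1/n)∑ᵢ S_k(P_θ, yᵢ) + ε·S_k(P_θ, z)` and the posterior
influence function `PIF(z, θ, P̂_n)` is the derivative at `ε = 0` of the posterior
density `π(θ) exp(-w n L(θ, P̂_{n,ε,z})) / ∫_Θ π(θ') exp(-w n L(θ', P̂_{n,ε,z})) dθ'`.
Conclusion: `sup_{θ∈Θ} sup_{z∈X} |PIF(z, θ, P̂_n)| < ∞`. -/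
theorem kernel_score_posterior_globally_bias_robust
    {d p : ℕ}
    (X : Set (EuclideanSpace ℝ (Fin d)))
    (Θ : Set (Fin p → ℝ)) (hΘ : MeasurableSet Θ)
    (P : (Fin p → ℝ) → Measure (EuclideanSpace ℝ (Fin d)))
    [∀ θ, IsProbabilityMeasure (P θ)]
    (hP_supp : ∀ θ ∈ Θ, P θ X = 1)
    (k : EuclideanSpace ℝ (Fin d) → EuclideanSpace ℝ (Fin d) → ℝ)
    (hk_meas : Measurable (Function.uncurry k))
    (hk_symm : ∀ x y, k x y = k y x)
    (κ : ℝ) (hκ : 0 ≤ κ)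
    (hk_bdd : ∀ x ∈ X, ∀ y ∈ X, |k x y| ≤ κ)
    (Sk : (Fin p → ℝ) → EuclideanSpace ℝ (Fin d) → ℝ)
    (hSk : ∀ θ y, Sk θ y =
      (∫ x, ∫ x', k x x' ∂(P θ) ∂(P θ)) - 2 * ∫ x, k x y ∂(P θ))
    (prior : (Fin p → ℝ) → ℝ) (hprior_meas : Measurable prior)
    (hprior_nonneg : ∀ θ, 0 ≤ prior θ)
    (hprior_bdd : ∃ Cπ : ℝ, ∀ θ ∈ Θ, prior θ ≤ Cπ)
    (w : ℝ) (hw : 0 < w)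
    (n : ℕ) (hn : 0 < n)
    (y : Fin n → EuclideanSpace ℝ (Fin d)) (hy : ∀ i, y i ∈ X) :
    ∃ C : ℝ, ∀ θ ∈ Θ, ∀ z ∈ X,
      |deriv (fun ε : ℝ =>
          prior θ * Real.exp (-(w * n) *
              ((1 - ε) * ((n : ℝ)⁻¹ * ∑ i, Sk θ (y i)) + ε * Sk θ z)) /
            ∫ θ' in Θ, prior θ' * Real.exp (-(w * n) *
              ((1 - ε) * ((n : ℝ)⁻¹ * ∑ i, Sk θ' (y i)) + ε * Sk θ' z))) 0| ≤ C := by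
  obtain ⟨Cπ, hCπ⟩ := hprior_bdd
  -- measurability of the partially applied kernel
  have hkv_meas : ∀ v, Measurable fun x => k x v := fun v =>
    hk_meas.comp (measurable_id.prodMk measurable_const)
  -- bound on single kernel integrals
  have hJ : ∀ θ' ∈ Θ, ∀ v ∈ X, |∫ x, k x v ∂(P θ')| ≤ κ := by
    intro θ' hθ' v hv
    have hsm : MeasurableSet {x | |k x v| ≤ κ} :=
      measurableSet_le (hkv_meas v).abs measurable_const
    have h1 : P θ' {x | |k x v| ≤ κ} = 1 :=
      le_antisymm prob_le_one (by
        rw [← hP_supp θ' hθ']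
        exact measure_mono fun x hx => hk_bdd x hx v hv)
    have hcompl : P θ' {x | |k x v| ≤ κ}ᶜ = 0 := by
      rw [measure_compl hsm (measure_ne_top _ _), h1, measure_univ, tsub_self]
    have hae : ∀ᵐ x ∂(P θ'), ‖k x v‖ ≤ κ := by
      have hmem : ∀ᵐ x ∂(P θ'), x ∈ {x | |k x v| ≤ κ} := mem_ae_iff.mpr hcompl
      filter_upwards [hmem] with x hx
      simpa [Real.norm_eq_abs] using hx
    calc |∫ x, k x v ∂(P θ')| = ‖∫ x, k x v ∂(P θ')‖ := (Real.norm_eq_abs _).symm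
    _ ≤ κ * (P θ' Set.univ).toReal := norm_integral_le_of_norm_le_const hae
    _ = κ := by simp
  -- bound on the double kernel integral
  have hinner_meas : ∀ θ', Measurable fun x => ∫ x', k x x' ∂(P θ') := by
    intro θ'
    have := hk_meas.stronglyMeasurable.integral_prod_right' (ν := P θ')
    exact this.measurable
  have hI : ∀ θ' ∈ Θ, |∫ x, ∫ x', k x x' ∂(P θ') ∂(P θ')| ≤ κ := by
    intro θ' hθ'
    have hsm : MeasurableSet {x | ‖∫ x', k x x' ∂(P θ')‖ ≤ κ} :=
      measurableSet_le (hinner_meas θ').norm measurable_const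
    have hsub : X ⊆ {x | ‖∫ x', k x x' ∂(P θ')‖ ≤ κ} := by
      intro x hx
      have hrw : (∫ x', k x x' ∂(P θ')) = ∫ x', k x' x ∂(P θ') :=
        integral_congr_ae (Filter.Eventually.of_forall fun x' => hk_symm x x')
      show ‖∫ x', k x x' ∂(P θ')‖ ≤ κ
      rw [Real.norm_eq_abs, hrw]
      exact hJ θ' hθ' x hx
    have h1 : P θ' {x | ‖∫ x', k x x' ∂(P θ')‖ ≤ κ} = 1 :=
      le_antisymm prob_le_one (by rw [← hP_supp θ' hθ']; exact measure_mono hsub)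
    have hcompl : P θ' {x | ‖∫ x', k x x' ∂(P θ')‖ ≤ κ}ᶜ = 0 := by
      rw [measure_compl hsm (measure_ne_top _ _), h1, measure_univ, tsub_self]
    have hae : ∀ᵐ x ∂(P θ'), ‖∫ x', k x x' ∂(P θ')‖ ≤ κ := mem_ae_iff.mpr hcompl
    calc |∫ x, ∫ x', k x x' ∂(P θ') ∂(P θ')| = ‖∫ x, ∫ x', k x x' ∂(P θ') ∂(P θ')‖ :=
      (Real.norm_eq_abs _).symm
    _ ≤ κ * (P θ' Set.univ).toReal := norm_integral_le_of_norm_le_const hae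
    _ = κ := by simp
  -- bound on the kernel score
  have hS3 : ∀ θ' ∈ Θ, ∀ v ∈ X, |Sk θ' v| ≤ 3 * κ := by
    intro θ' hθ' v hv
    rw [hSk]
    rcases abs_le.mp (hI θ' hθ') with ⟨hI1, hI2⟩
    rcases abs_le.mp (hJ θ' hθ' v hv) with ⟨hJ1, hJ2⟩
    rw [abs_le]
    constructor <;> nlinarith
  -- bound on the average score
  have hAbd : ∀ t ∈ Θ, |(n:ℝ)⁻¹ * ∑ i, Sk t (y i)| ≤ 3 * κ := by
    intro t ht
    have hn' : (0:ℝ) < n := Nat.cast_pos.mpr hn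
    have hsum : |∑ i, Sk t (y i)| ≤ (n:ℝ) * (3 * κ) := by
      calc |∑ i, Sk t (y i)| ≤ ∑ i, |Sk t (y i)| := Finset.abs_sum_le_sum_abs _ _
      _ ≤ ∑ _i : Fin n, (3 * κ) :=
        Finset.sum_le_sum fun i _ => hS3 t ht (y i) (hy i)
      _ = (n:ℝ) * (3 * κ) := by
        rw [Finset.sum_const, Finset.card_univ, Fintype.card_fin, nsmul_eq_mul]
    rw [abs_mul, abs_inv, Nat.abs_cast]
    rw [inv_mul_le_iff₀ hn']
    calc |∑ i, Sk t (y i)| ≤ (n:ℝ) * (3 * κ) := hsum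
    _ = (n:ℝ) * (3 * κ) := rfl
  have hwn : (0:ℝ) < w * n := mul_pos hw (Nat.cast_pos.mpr hn)
  -- the base weight and tilt
  set g : (Fin p → ℝ) → ℝ :=
    fun t => prior t * Real.exp (-(w * n) * ((n:ℝ)⁻¹ * ∑ i, Sk t (y i))) with hgdef
  have hgnn : ∀ t, 0 ≤ g t := fun t => mul_nonneg (hprior_nonneg t) (Real.exp_pos _).le
  set K : ℝ := w * n * (3 * κ) with hKdef
  set M : ℝ := w * n * (6 * κ) with hMdef
  have hM0 : (0:ℝ) ≤ M := by positivity
  set Cπ' : ℝ := max Cπ 0 with hCπ'def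
  have hgbd : ∀ t ∈ Θ, g t ≤ Cπ' * Real.exp K := by
    intro t ht
    have h1 : prior t ≤ Cπ' := le_trans (hCπ t ht) (le_max_left _ _)
    have h2 : Real.exp (-(w * n) * ((n:ℝ)⁻¹ * ∑ i, Sk t (y i))) ≤ Real.exp K := by
      apply Real.exp_le_exp.mpr
      have hA := hAbd t ht
      calc -(w * n) * ((n:ℝ)⁻¹ * ∑ i, Sk t (y i))
          ≤ |(-(w * n)) * ((n:ℝ)⁻¹ * ∑ i, Sk t (y i))| := le_abs_self _
      _ = (w * n) * |(n:ℝ)⁻¹ * ∑ i, Sk t (y i)| := by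
        rw [abs_mul, abs_neg, abs_of_pos hwn]
      _ ≤ (w * n) * (3 * κ) := mul_le_mul_of_nonneg_left hA hwn.le
      _ = K := rfl
    calc g t ≤ Cπ' * Real.exp (-(w * n) * ((n:ℝ)⁻¹ * ∑ i, Sk t (y i))) :=
      mul_le_mul_of_nonneg_right h1 (Real.exp_pos _).le
    _ ≤ Cπ' * Real.exp K := mul_le_mul_of_nonneg_left h2 (le_max_right _ _)
  refine ⟨max (2 * (Cπ' * Real.exp K) * M / ∫ t in Θ, g t) 0, ?_⟩
  intro θ hθ z hz
  set tilt : (Fin p → ℝ) → ℝ :=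
    fun t => w * n * (((n:ℝ)⁻¹ * ∑ i, Sk t (y i)) - Sk t z) with htilt
  have htiltM : ∀ t ∈ Θ, |tilt t| ≤ M := by
    intro t ht
    simp only [htilt]
    rw [abs_mul, abs_of_pos hwn]
    have hA := hAbd t ht
    have hB := hS3 t ht z hz
    have habs : |((n:ℝ)⁻¹ * ∑ i, Sk t (y i)) - Sk t z| ≤ 6 * κ := by
      calc |((n:ℝ)⁻¹ * ∑ i, Sk t (y i)) - Sk t z|
          ≤ |(n:ℝ)⁻¹ * ∑ i, Sk t (y i)| + |Sk t z| := abs_sub _ _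
      _ ≤ 3 * κ + 3 * κ := add_le_add hA hB
      _ = 6 * κ := by ring
    exact mul_le_mul_of_nonneg_left habs hwn.le
  have hpoint : ∀ (t : Fin p → ℝ) (ε : ℝ),
      prior t * Real.exp (-(w * n) * ((1 - ε) * ((n:ℝ)⁻¹ * ∑ i, Sk t (y i)) + ε * Sk t z))
        = g t * Real.exp (ε * tilt t) := by
    intro t ε
    simp only [hgdef, htilt]
    have hexp : -(w * (n:ℝ)) * ((1 - ε) * ((n:ℝ)⁻¹ * ∑ i, Sk t (y i)) + ε * Sk t z)
        = -(w * (n:ℝ)) * ((n:ℝ)⁻¹ * ∑ i, Sk t (y i))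
          + ε * (w * (n:ℝ) * (((n:ℝ)⁻¹ * ∑ i, Sk t (y i)) - Sk t z)) := by ring
    rw [hexp, Real.exp_add, ← mul_assoc]
  have hfun : (fun ε : ℝ =>
      prior θ * Real.exp (-(w * n) * ((1 - ε) * ((n:ℝ)⁻¹ * ∑ i, Sk θ (y i)) + ε * Sk θ z)) /
        ∫ θ' in Θ, prior θ' * Real.exp (-(w * n) *
          ((1 - ε) * ((n:ℝ)⁻¹ * ∑ i, Sk θ' (y i)) + ε * Sk θ' z)))
      = fun ε : ℝ => g θ * Real.exp (ε * tilt θ) /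
          ∫ t, g t * Real.exp (ε * tilt t) ∂(MeasureTheory.volume.restrict Θ) := by
    funext ε
    rw [hpoint θ ε]
    congr 1
    exact integral_congr_ae (Filter.Eventually.of_forall fun t => hpoint t ε)
  rw [hfun]
  have hhMae : ∀ᵐ t ∂(MeasureTheory.volume.restrict Θ), |tilt t| ≤ M := by
    filter_upwards [ae_restrict_mem hΘ] with t ht
    exact htiltM t ht
  exact aux_bound g tilt θ M (Cπ' * Real.exp K) hM0 hgnn (hgbd θ hθ) (htiltM θ hθ) hhMae
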